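/- If P is M-bounded and its support contains more than k points, then p_min ≥ (R*_{k−1} − R*_k) / (4M²), where R*_j denotes the minimal distortion achievable by codebooks of j points and p_min = inf_{c* ∈ M, i} P(V_i(c*)). -/

import Mathlib

open MeasureTheory Metric

noncomputable section

variable {H : Type*} [NormedAddCommGroup H] [InnerProductSpace ℝ H] [MeasurableSpace H]

/-- `qgamma k c x = min_j ‖x - c j‖²`. -/
def qgamma (k : ℕ) (c : Fin k → H) (x : H) : ℝ := ⨅ j : Fin k, ‖x - c j‖ ^ 2

/-- distortion (risk) of a codebook. -/
def qrisk (k : ℕ) (P : Measure H) (c : Fin k → H) : ℝ := ∫ x, qgamma k c x ∂P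

/-- the set of optimal codebooks. -/
def qopt (k : ℕ) (P : Measure H) : Set (Fin k → H) :=
  {c | ∀ c' : Fin k → H, qrisk k P c ≤ qrisk k P c'}

/-- the `i`-th (closed) Voronoi cell of the codebook `c`. -/
def vcell (k : ℕ) (c : Fin k → H) (i : Fin k) : Set H :=
  {x | ∀ j : Fin k, ‖x - c i‖ ≤ ‖x - c j‖}

/-- `B`, the minimal separation between code points of optimal codebooks. -/
def qB (k : ℕ) (P : Measure H) : ℝ :=
  sInf {b | ∃ c ∈ qopt k P, ∃ i j : Fin k, i ≠ j ∧ b = ‖c i - c j‖}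

/-- `p_min`, the minimal mass of a Voronoi cell of an optimal codebook. -/
def qpmin (k : ℕ) (P : Measure H) : ℝ :=
  sInf {p | ∃ c ∈ qopt k P, ∃ i : Fin k, p = (P (vcell k c i)).toReal}

/-- `N_{c*}`, the union of the boundaries between Voronoi cells. -/
def nbd (k : ℕ) (c : Fin k → H) : Set H :=
  ⋃ (i : Fin k) (j : Fin k) (_ : i ≠ j), vcell k c i ∩ vcell k c j

/-- the weight function `p(t)`, the maximal mass of the closed `t`-neighborhood
of `N_{c*}` over optimal codebooks `c*`. -/
def pweight (k : ℕ) (P : Measure H) (t : ℝ) : ℝ :=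
  sSup {p | ∃ c ∈ qopt k P, p = (P (cthickening t (nbd k c))).toReal}

/-- `P` is `M`-bounded: its support is contained in the closed ball `B(0,M)`. -/
def mbounded (P : Measure H) (M : ℝ) : Prop := P (closedBall (0 : H) M)ᶜ = 0

/-- the support of `P` contains more than `k` points. -/
def suppGT (P : Measure H) (k : ℕ) : Prop :=
  ∀ S : Finset H, S.card ≤ k → P ((S : Set H)ᶜ) ≠ 0

/-- the margin condition with radius `r0`. -/
def margin (k : ℕ) (P : Measure H) (M r0 : ℝ) : Prop :=
  0 < r0 ∧ mbounded P M ∧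
    ∀ t : ℝ, 0 ≤ t → t ≤ r0 → pweight k P t ≤ qB k P * qpmin k P * t / (128 * M ^ 2)

/-- `R*_j`, the minimal distortion achievable by codebooks of `j` points. -/
def qriskStar (j : ℕ) (P : Measure H) : ℝ :=
  sInf {v | ∃ c : Fin j → H, v = qrisk j P c}

/-! ### Auxiliary lemmas -/

lemma qgamma_nonneg (k : ℕ) (c : Fin k → H) (x : H) : 0 ≤ qgamma k c x :=
  Real.iInf_nonneg fun _ => by positivity

lemma qgamma_le (k : ℕ) (c : Fin k → H) (x : H) (j : Fin k) :
    qgamma k c x ≤ ‖x - c j‖ ^ 2 :=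
  ciInf_le ⟨0, by rintro _ ⟨j, rfl⟩; positivity⟩ j

lemma le_qgamma (k : ℕ) [Nonempty (Fin k)] (c : Fin k → H) (x : H) {a : ℝ}
    (h : ∀ j, a ≤ ‖x - c j‖ ^ 2) : a ≤ qgamma k c x :=
  le_ciInf h

lemma qrisk_nonneg (k : ℕ) (P : Measure H) (c : Fin k → H) : 0 ≤ qrisk k P c :=
  integral_nonneg (qgamma_nonneg k c)

lemma measurable_qgamma [BorelSpace H] [SecondCountableTopology H]
    (k : ℕ) (c : Fin k → H) : Measurable fun x => qgamma k c x :=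
  Measurable.iInf fun j => ((measurable_id.sub_const (c j)).norm.pow_const 2)

lemma ae_norm_le {P : Measure H} {M : ℝ} (hbd : mbounded P M) :
    ∀ᵐ x ∂P, ‖x‖ ≤ M := by
  rw [ae_iff]
  have h : {x : H | ¬ ‖x‖ ≤ M} = (closedBall (0 : H) M)ᶜ := by
    ext x; simp [mem_closedBall, dist_zero_right]
  rw [h]; exact hbd

lemma integrable_qgamma [BorelSpace H] [SecondCountableTopology H]
    (k : ℕ) (c : Fin k → H) (j : Fin k) {P : Measure H} [IsFiniteMeasure P]
    {M : ℝ} (hbd : mbounded P M) :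
    Integrable (fun x => qgamma k c x) P := by
  refine (integrable_const ((M + ‖c j‖) ^ 2)).mono'
    (measurable_qgamma k c).aestronglyMeasurable ?_
  filter_upwards [ae_norm_le hbd] with x hx
  rw [Real.norm_eq_abs, abs_of_nonneg (qgamma_nonneg _ _ _)]
  calc qgamma k c x ≤ ‖x - c j‖ ^ 2 := qgamma_le k c x j
    _ ≤ (M + ‖c j‖) ^ 2 := by
        refine pow_le_pow_left₀ (norm_nonneg _) ?_ 2
        calc ‖x - c j‖ ≤ ‖x‖ + ‖c j‖ := norm_sub_le _ _
          _ ≤ M + ‖c j‖ := by linarith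

/-- The radial projection of `H` onto the ball `B(0,M)`. -/
def projM (M : ℝ) (y : H) : H := if ‖y‖ ≤ M then y else (M / ‖y‖) • y

lemma norm_projM_le {M : ℝ} (hM : 0 < M) (y : H) : ‖projM M y‖ ≤ M := by
  unfold projM
  split_ifs with h
  · exact h
  · push_neg at h
    have hy : 0 < ‖y‖ := lt_trans hM h
    rw [norm_smul, Real.norm_eq_abs, abs_of_pos (div_pos hM hy),
      div_mul_cancel₀ _ (ne_of_gt hy)]

lemma norm_sub_projM_le {M : ℝ} (hM : 0 < M) {x : H} (hx : ‖x‖ ≤ M) (y : H) :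
    ‖x - projM M y‖ ≤ ‖x - y‖ := by
  unfold projM
  split_ifs with h
  · exact le_rfl
  · push_neg at h
    have hy : 0 < ‖y‖ := lt_trans hM h
    refine le_of_pow_le_pow_left₀ two_ne_zero (norm_nonneg _) ?_
    have hs : (M / ‖y‖) * ‖y‖ = M := div_mul_cancel₀ _ (ne_of_gt hy)
    have hs1 : M / ‖y‖ ≤ 1 := by rw [div_le_one hy]; exact le_of_lt h
    have e1 : ‖x - (M / ‖y‖) • y‖ ^ 2
        = ‖x‖ ^ 2 - 2 * ((M / ‖y‖) * inner ℝ x y) + M ^ 2 := by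
      rw [norm_sub_sq_real, real_inner_smul_right, norm_smul, Real.norm_eq_abs,
        abs_of_pos (div_pos hM hy), mul_pow, ← mul_pow, hs]
    have e2 : ‖x - y‖ ^ 2 = ‖x‖ ^ 2 - 2 * inner ℝ x y + ‖y‖ ^ 2 :=
      norm_sub_sq_real x y
    have hIM : (inner ℝ x y : ℝ) ≤ M * ‖y‖ := by
      calc (inner ℝ x y : ℝ) ≤ ‖x‖ * ‖y‖ := real_inner_le_norm x y
        _ ≤ M * ‖y‖ := mul_le_mul_of_nonneg_right hx (le_of_lt hy)
    have h1 : 0 ≤ (1 - M / ‖y‖) * (M * ‖y‖ - inner ℝ x y) :=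
      mul_nonneg (by linarith) (by linarith)
    have hsM : (M / ‖y‖) * ‖y‖ * M = M * M := by rw [hs]
    rw [e1, e2]
    nlinarith [sq_nonneg (‖y‖ - M)]

/-- From the proof of Proposition 2.1: `p_min ≥ (R*_{k−1} − R*_k)/(4M²)`. -/
theorem stmt18 [BorelSpace H] [SecondCountableTopology H] [CompleteSpace H]
    (k : ℕ) (hk : 2 ≤ k) (P : Measure H) [IsProbabilityMeasure P]
    (M : ℝ) (hM : 0 < M) (hbd : mbounded P M) (hsupp : suppGT P k)
    (hne : (qopt k P).Nonempty) :
    (qriskStar (k - 1) P - qriskStar k P) / (4 * M ^ 2) ≤ qpmin k P := by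
  obtain ⟨m, rfl⟩ : ∃ m, k = m + 1 := ⟨k - 1, by omega⟩
  simp only [Nat.add_sub_cancel]
  haveI : Nonempty (Fin m) := ⟨⟨0, by omega⟩⟩
  have h4 : (0 : ℝ) < 4 * M ^ 2 := by positivity
  -- lower bounds for the risk sets
  have bddm : BddBelow {v | ∃ c : Fin m → H, v = qrisk m P c} :=
    ⟨0, by rintro v ⟨c', rfl⟩; exact qrisk_nonneg _ _ _⟩
  have bddk : BddBelow {v | ∃ c : Fin (m + 1) → H, v = qrisk (m + 1) P c} :=
    ⟨0, by rintro v ⟨c', rfl⟩; exact qrisk_nonneg _ _ _⟩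
  obtain ⟨c₀, hc₀⟩ := hne
  refine le_csInf ⟨(P (vcell (m + 1) c₀ 0)).toReal, c₀, hc₀, 0, rfl⟩ ?_
  rintro p ⟨c, hc, i, rfl⟩
  rw [div_le_iff₀ h4]
  set V := vcell (m + 1) c i with hV
  -- the optimal risk equals the risk of `c`
  have hRk : qriskStar (m + 1) P = qrisk (m + 1) P c := by
    refine le_antisymm (csInf_le bddk ⟨c, rfl⟩) (le_csInf ⟨_, c, rfl⟩ ?_)
    rintro v ⟨c', rfl⟩; exact hc c'
  -- the reduced codebook
  set d : Fin m → H := fun j => projM M (c (i.succAbove j)) with hd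
  have hRm : qriskStar m P ≤ qrisk m P d := csInf_le bddm ⟨d, rfl⟩
  -- pointwise comparison
  have hgood : ∀ x : H, ‖x‖ ≤ M →
      qgamma m d x ≤ qgamma (m + 1) c x + V.indicator (fun _ => 4 * M ^ 2) x := by
    intro x hx
    have hdle : ∀ j : Fin m, ‖x - d j‖ ≤ ‖x - c (i.succAbove j)‖ := fun j =>
      norm_sub_projM_le hM hx _
    by_cases hxV : x ∈ V
    · rw [Set.indicator_of_mem hxV]
      have h1 : qgamma m d x ≤ 4 * M ^ 2 := by
        obtain ⟨j⟩ := ‹Nonempty (Fin m)›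
        calc qgamma m d x ≤ ‖x - d j‖ ^ 2 := qgamma_le m d x j
          _ ≤ (2 * M) ^ 2 := by
              refine pow_le_pow_left₀ (norm_nonneg _) ?_ 2
              calc ‖x - d j‖ ≤ ‖x‖ + ‖d j‖ := norm_sub_le _ _
                _ ≤ M + M := add_le_add hx (norm_projM_le hM _)
                _ = 2 * M := by ring
          _ = 4 * M ^ 2 := by ring
      linarith [qgamma_nonneg (m + 1) c x]
    · rw [Set.indicator_of_notMem hxV, add_zero]
      have hxV' : ∃ j, ‖x - c j‖ < ‖x - c i‖ := by
        by_contra hcon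
        push_neg at hcon
        exact hxV fun j => hcon j
      obtain ⟨j₁, hj₁⟩ := hxV'
      have hne1 : j₁ ≠ i := by
        rintro rfl; exact lt_irrefl _ hj₁
      obtain ⟨m₁, hm₁⟩ := Fin.exists_succAbove_eq hne1
      refine le_qgamma (m + 1) c x fun j => ?_
      by_cases hji : j = i
      · subst hji
        calc qgamma m d x ≤ ‖x - d m₁‖ ^ 2 := qgamma_le m d x m₁
          _ ≤ ‖x - c j₁‖ ^ 2 := by
              refine pow_le_pow_left₀ (norm_nonneg _) ?_ 2
              rw [← hm₁]; exact hdle m₁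
          _ ≤ ‖x - c j‖ ^ 2 := pow_le_pow_left₀ (norm_nonneg _) hj₁.le 2
      · obtain ⟨m', hm'⟩ := Fin.exists_succAbove_eq hji
        calc qgamma m d x ≤ ‖x - d m'‖ ^ 2 := qgamma_le m d x m'
          _ ≤ ‖x - c j‖ ^ 2 := by
              refine pow_le_pow_left₀ (norm_nonneg _) ?_ 2
              rw [← hm']; exact hdle m'
  -- measurability of the Voronoi cell
  have hVmeas : MeasurableSet V := by
    have : IsClosed V := by
      have : V = ⋂ j : Fin (m + 1), {x : H | ‖x - c i‖ ≤ ‖x - c j‖} := by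
        ext x; simp [hV, vcell]
      rw [this]
      exact isClosed_iInter fun j =>
        isClosed_le ((continuous_id.sub continuous_const).norm)
          ((continuous_id.sub continuous_const).norm)
    exact this.measurableSet
  -- integrability
  have int_c : Integrable (fun x => qgamma (m + 1) c x) P :=
    integrable_qgamma (m + 1) c i hbd
  have int_d : Integrable (fun x => qgamma m d x) P :=
    integrable_qgamma m d (Classical.arbitrary _) hbd
  have int_ind : Integrable (V.indicator fun _ => (4 : ℝ) * M ^ 2) P :=
    (integrable_const ((4 : ℝ) * M ^ 2)).indicator hVmeas
  -- integrate the pointwise comparison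
  have hint : qrisk m P d ≤ qrisk (m + 1) P c + (P V).toReal * (4 * M ^ 2) := by
    have hmono : ∫ x, qgamma m d x ∂P ≤
        ∫ x, (qgamma (m + 1) c x + V.indicator (fun _ => 4 * M ^ 2) x) ∂P := by
      refine integral_mono_ae int_d (int_c.add int_ind) ?_
      filter_upwards [ae_norm_le hbd] with x hx
      exact hgood x hx
    rw [integral_add int_c int_ind, integral_indicator_const _ hVmeas,
      smul_eq_mul] at hmono
    exact hmono
  linarith

end
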